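/- Let V be a vector space over an infinite field K and let v₁, …, v_k ∈ V. Then there exist scalars α₁, …, α_k ∈ K, all nonzero, with α₁v₁ + ⋯ + α_k v_k = 0 if and only if for every index i the linear span of {v₁, …, v_k} equals the linear span of {v₁, …, v_k} \ {vᵢ} (i.e. each vᵢ lies in the span of the remaining vectors). -/

import Mathlib

/-- Over an infinite field, vectors `v₁, …, v_k` admit a linear relation with all
coefficients nonzero iff removing any one vector does not change the span. -/
theorem relation_all_nonzero_iff_span (K V : Type*) [Field K] [Infinite K]
    [AddCommGroup V] [Module K V] (k : ℕ) (v : Fin k → V) :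
    (∃ α : Fin k → K, (∀ i, α i ≠ 0) ∧ ∑ i, α i • v i = 0) ↔
      ∀ i : Fin k,
        Submodule.span K (Set.range v) = Submodule.span K (v '' ({i}ᶜ : Set (Fin k))) := by
  classical
  constructor
  · rintro ⟨α, hα, hsum⟩ i
    refine le_antisymm ?_ (Submodule.span_mono (Set.image_subset_range _ _))
    rw [Submodule.span_le]
    rintro x ⟨j, rfl⟩
    by_cases hji : j = i
    · subst hji
      have hsum' : α j • v j + ∑ l ∈ Finset.univ.erase j, α l • v l = 0 := by
        rw [Finset.add_sum_erase Finset.univ (fun l => α l • v l) (Finset.mem_univ j)]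
        exact hsum
      have h1 : α j • v j = -∑ l ∈ Finset.univ.erase j, α l • v l :=
        eq_neg_of_add_eq_zero_left hsum'
      have h2 : α j • v j ∈ Submodule.span K (v '' ({j}ᶜ : Set (Fin k))) := by
        rw [h1]
        refine Submodule.neg_mem _ (Submodule.sum_mem _ fun l hl => ?_)
        exact Submodule.smul_mem _ _ (Submodule.subset_span
          ⟨l, by simpa using (Finset.mem_erase.mp hl).1, rfl⟩)
      have h3 := (Submodule.span K (v '' ({j}ᶜ : Set (Fin k)))).smul_mem (α j)⁻¹ h2
      rwa [inv_smul_smul₀ (hα j)] at h3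
    · exact Submodule.subset_span ⟨j, by simp [hji], rfl⟩
  · intro h
    set L : (Fin k → K) →ₗ[K] V := Fintype.linearCombination K v with hL
    set W : Submodule K (Fin k → K) := LinearMap.ker L with hW
    -- for each i, there is a relation with nonzero i-th coefficient
    have key : ∀ i : Fin k, ∃ c : Fin k → K, c ∈ W ∧ c i ≠ 0 := by
      intro i
      have hvi : v i ∈ Submodule.span K (v '' ({i}ᶜ : Set (Fin k))) := by
        rw [← h i]; exact Submodule.subset_span ⟨i, rfl⟩
      obtain ⟨l, hl, hlv⟩ := (Finsupp.mem_span_image_iff_linearCombination K).mp hvi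
      refine ⟨(l : Fin k → K) - Pi.single i 1, ?_, ?_⟩
      · have : L ((l : Fin k → K) - Pi.single i 1) = 0 := by
          rw [map_sub]
          have h1 : L (Pi.single i 1) = v i := by
            simp [hL, Fintype.linearCombination_apply_single]
          have h2 : L (l : Fin k → K) = v i := by
            rw [← hlv, hL, Fintype.linearCombination_apply,
              Finsupp.linearCombination_apply, Finsupp.sum_fintype]
            · intro j; simp
          rw [h1, h2, sub_self]
        exact this
      · have hli : l i = 0 := by
          by_contra hne
          have := hl (Finsupp.mem_support_iff.mpr hne)
          simp at this
        simp [hli]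
    -- the coordinate hyperplanes in W are proper
    set H : Fin k → Submodule K W := fun i =>
      LinearMap.ker ((LinearMap.proj i).comp W.subtype) with hH
    have hHne : ∀ i, H i ≠ ⊤ := by
      intro i hi
      obtain ⟨c, hcW, hci⟩ := key i
      have : (⟨c, hcW⟩ : W) ∈ H i := hi ▸ Submodule.mem_top
      exact hci this
    have hcover : ⋃ i, ((H i : Submodule K W) : Set W) ≠ Set.univ := by
      intro hcov
      obtain ⟨i, hi⟩ := Subspace.exists_eq_top_of_iUnion_eq_univ hcov
      exact hHne i hi
    obtain ⟨x, hx⟩ := Set.ne_univ_iff_exists_notMem _ |>.mp hcover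
    simp only [Set.mem_iUnion, not_exists, SetLike.mem_coe] at hx
    refine ⟨(x : Fin k → K), fun i => ?_, ?_⟩
    · intro h0
      exact hx i (by simpa [hH] using h0)
    · exact x.2
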